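/- Let γ ∈ ℝ, κ ∈ ℝ⁴, and set w(x) = (γ/2)·Σ_a x_a² + Σ_a κ_a x_a for x ∈ ℝ⁴. Let I ⊆ ℝ be an open interval, U = { x ∈ ℝ⁴ : w(x) ∈ I }, and let 𝒢 : I → ℝ be twice continuously differentiable; define G(x) = 𝒢(w(x)) and let H(x) = ℋ(w(x)) where ℋ : I → ℝ satisfies ℋ'(w) = e^{2𝒢(w)} for all w ∈ I. Then G and H satisfy Δ G + |∇G|² − |∇H|² = 0 at every point of U if and only if g := e^{𝒢} satisfies the ordinary differential equation g''(w)·(2γw + |κ|²) + 4γ·g'(w) − g(w)⁵·(2γw + |κ|²) = 0 for every w in the image w(U). -/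

import Mathlib

/-- Partial derivative in the `a`-th coordinate direction on Euclidean ℝ⁴. -/
noncomputable def pdR (a : Fin 4) (f : EuclideanSpace ℝ (Fin 4) → ℝ)
    (x : EuclideanSpace ℝ (Fin 4)) : ℝ :=
  fderiv ℝ f x (EuclideanSpace.single a 1)

section aux

variable (γ : ℝ) (κ : Fin 4 → ℝ)

/-- The derivative of `w` as a continuous linear map. -/
noncomputable def Dw (x : EuclideanSpace ℝ (Fin 4)) : EuclideanSpace ℝ (Fin 4) →L[ℝ] ℝ :=
  ∑ a : Fin 4, (γ * x a + κ a) • (EuclideanSpace.proj a : EuclideanSpace ℝ (Fin 4) →L[ℝ] ℝ)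

lemma hasFDerivAt_w (x : EuclideanSpace ℝ (Fin 4)) :
    HasFDerivAt (fun x : EuclideanSpace ℝ (Fin 4) =>
        (γ / 2) * ∑ a : Fin 4, (x a) ^ 2 + ∑ a : Fin 4, κ a * x a)
      (Dw γ κ x) x := by
  have h1 : ∀ a : Fin 4, HasFDerivAt (fun x : EuclideanSpace ℝ (Fin 4) => x a)
      (EuclideanSpace.proj a : EuclideanSpace ℝ (Fin 4) →L[ℝ] ℝ) x :=
    fun a => (EuclideanSpace.proj (𝕜 := ℝ) a).hasFDerivAt
  have hsq : ∀ a : Fin 4, HasFDerivAt (fun x : EuclideanSpace ℝ (Fin 4) => (x a) ^ 2)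
      (((2 : ℝ) * x a) • (EuclideanSpace.proj a : EuclideanSpace ℝ (Fin 4) →L[ℝ] ℝ)) x := by
    intro a
    have h2 : HasFDerivAt (fun y : EuclideanSpace ℝ (Fin 4) => (y a) ^ 2)
        (x a • (EuclideanSpace.proj a : EuclideanSpace ℝ (Fin 4) →L[ℝ] ℝ)
          + x a • (EuclideanSpace.proj a : EuclideanSpace ℝ (Fin 4) →L[ℝ] ℝ)) x := by
      simpa [sq] using (h1 a).fun_mul (h1 a)
    exact h2.congr_fderiv (by ext v; simp; ring)
  have h2 : HasFDerivAt (fun x : EuclideanSpace ℝ (Fin 4) =>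
      (γ / 2) * ∑ a : Fin 4, (x a) ^ 2 + ∑ a : Fin 4, κ a * x a)
      ((γ / 2) • (∑ a : Fin 4, ((2 : ℝ) * x a) • (EuclideanSpace.proj a : EuclideanSpace ℝ (Fin 4) →L[ℝ] ℝ))
        + ∑ a : Fin 4, (κ a) • (EuclideanSpace.proj a : EuclideanSpace ℝ (Fin 4) →L[ℝ] ℝ)) x :=
    HasFDerivAt.add (HasFDerivAt.const_mul (HasFDerivAt.fun_sum fun a _ => hsq a) _)
      (HasFDerivAt.fun_sum fun a _ => (h1 a).const_mul _)
  refine h2.congr_fderiv ?_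
  ext v
  simp [Dw, Finset.smul_sum, ← Finset.sum_add_distrib, add_mul]
  refine Finset.sum_congr rfl fun a _ => ?_
  ring

lemma Dw_apply (x : EuclideanSpace ℝ (Fin 4)) (a : Fin 4) :
    Dw γ κ x (EuclideanSpace.single a 1) = γ * x a + κ a := by
  simp [Dw, EuclideanSpace.single_apply]

end aux

/-- For profile functions depending only on `w(x) = (γ/2)Σx_a² + Σκ_a x_a`, with
`ℋ' = e^{2𝒢}`, the scalar equation `ΔG + |∇G|² − |∇H|² = 0` on
`U = w⁻¹(I)` is equivalent to the ODE
`g''(2γw+|κ|²) + 4γg' − g⁵(2γw+|κ|²) = 0` for `g = e^𝒢` on `w(U)`. -/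
theorem scalar_equation_iff_reduced_ODE
    (γ : ℝ) (κ : Fin 4 → ℝ) (I : Set ℝ) (hIopen : IsOpen I) (hIconn : I.OrdConnected)
    (𝒢 ℋ : ℝ → ℝ) (h𝒢 : ContDiffOn ℝ 2 𝒢 I)
    (hℋ : ∀ w ∈ I, HasDerivAt ℋ (Real.exp (2 * 𝒢 w)) w) :
    let w : EuclideanSpace ℝ (Fin 4) → ℝ :=
      fun x => (γ / 2) * ∑ a : Fin 4, (x a) ^ 2 + ∑ a : Fin 4, κ a * x a
    let U : Set (EuclideanSpace ℝ (Fin 4)) := {x | w x ∈ I}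
    let G : EuclideanSpace ℝ (Fin 4) → ℝ := fun x => 𝒢 (w x)
    let H : EuclideanSpace ℝ (Fin 4) → ℝ := fun x => ℋ (w x)
    let g : ℝ → ℝ := fun s => Real.exp (𝒢 s)
    ((∀ x ∈ U,
        (∑ a : Fin 4, pdR a (fun y => pdR a G y) x)
          + (∑ a : Fin 4, (pdR a G x) ^ 2) - (∑ a : Fin 4, (pdR a H x) ^ 2) = 0)
      ↔
     (∀ t ∈ w '' U,
        deriv (deriv g) t * (2 * γ * t + ∑ a : Fin 4, (κ a) ^ 2)
          + 4 * γ * deriv g t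
          - (g t) ^ 5 * (2 * γ * t + ∑ a : Fin 4, (κ a) ^ 2) = 0)) := by
  intro w U G H g
  have hw : ∀ x, HasFDerivAt w (Dw γ κ x) x := hasFDerivAt_w γ κ
  have hwC : Continuous w := continuous_iff_continuousAt.2 fun x => (hw x).continuousAt
  have hUopen : IsOpen U := hIopen.preimage hwC
  -- first and second derivative data for 𝒢 on I
  have hp : ∀ t ∈ I, HasDerivAt 𝒢 (deriv 𝒢 t) t := by
    intro t ht
    exact (((h𝒢.contDiffAt (hIopen.mem_nhds ht)).differentiableAt
      (by norm_num)).hasDerivAt)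
  have hderivC : ContDiffOn ℝ 1 (deriv 𝒢) I :=
    h𝒢.deriv_of_isOpen hIopen (by norm_num)
  have hq : ∀ t ∈ I, HasDerivAt (deriv 𝒢) (deriv (deriv 𝒢) t) t := by
    intro t ht
    exact ((hderivC.contDiffAt (hIopen.mem_nhds ht)).differentiableAt
      (by norm_num)).hasDerivAt
  -- first partial derivatives of G and H
  have hGf : ∀ x ∈ U, HasFDerivAt G (deriv 𝒢 (w x) • Dw γ κ x) x := by
    intro x hx
    exact (hp (w x) hx).comp_hasFDerivAt x (hw x)
  have hpdG : ∀ a : Fin 4, ∀ x ∈ U, pdR a G x = deriv 𝒢 (w x) * (γ * x a + κ a) := by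
    intro a x hx
    rw [pdR, (hGf x hx).fderiv]
    simp [Dw_apply]
  have hpdH : ∀ a : Fin 4, ∀ x ∈ U,
      pdR a H x = Real.exp (2 * 𝒢 (w x)) * (γ * x a + κ a) := by
    intro a x hx
    have hHf : HasFDerivAt H (Real.exp (2 * 𝒢 (w x)) • Dw γ κ x) x :=
      (hℋ (w x) hx).comp_hasFDerivAt x (hw x)
    rw [pdR, hHf.fderiv]
    simp [Dw_apply]
  -- second partial derivatives of G
  have hpd2G : ∀ a : Fin 4, ∀ x ∈ U, pdR a (fun y => pdR a G y) x =
      deriv 𝒢 (w x) * γ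
        + (γ * x a + κ a) * (deriv (deriv 𝒢) (w x) * (γ * x a + κ a)) := by
    intro a x hx
    have heq : (fun y => pdR a G y) =ᶠ[nhds x]
        (fun y => deriv 𝒢 (w y) * (γ * y a + κ a)) := by
      filter_upwards [hUopen.mem_nhds hx] with y hy
      exact hpdG a y hy
    have hc : HasFDerivAt (fun y : EuclideanSpace ℝ (Fin 4) => γ * y a + κ a)
        (γ • (EuclideanSpace.proj a : EuclideanSpace ℝ (Fin 4) →L[ℝ] ℝ)) x :=
      (((EuclideanSpace.proj (𝕜 := ℝ) a).hasFDerivAt).const_mul γ).add_const (κ a)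
    have hpw : HasFDerivAt (fun y => deriv 𝒢 (w y))
        (deriv (deriv 𝒢) (w x) • Dw γ κ x) x :=
      (hq (w x) hx).comp_hasFDerivAt x (hw x)
    have hmul := hpw.fun_mul hc
    rw [pdR, heq.fderiv_eq, hmul.fderiv]
    simp [Dw_apply]
  -- derivatives of g on I
  have hg1 : ∀ t ∈ I, HasDerivAt g (Real.exp (𝒢 t) * deriv 𝒢 t) t := by
    intro t ht
    exact (hp t ht).exp
  have hg1' : ∀ t ∈ I, deriv g t = Real.exp (𝒢 t) * deriv 𝒢 t :=
    fun t ht => (hg1 t ht).deriv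
  have hg2 : ∀ t ∈ I, deriv (deriv g) t =
      (Real.exp (𝒢 t) * deriv 𝒢 t) * deriv 𝒢 t
        + Real.exp (𝒢 t) * deriv (deriv 𝒢) t := by
    intro t ht
    have heq : deriv g =ᶠ[nhds t] fun s => Real.exp (𝒢 s) * deriv 𝒢 s := by
      filter_upwards [hIopen.mem_nhds ht] with s hs
      exact hg1' s hs
    rw [heq.deriv_eq]
    exact ((hg1 t ht).mul (hq t ht)).deriv
  -- pointwise identity
  have key : ∀ x ∈ U,
      Real.exp (𝒢 (w x)) *
        ((∑ a : Fin 4, pdR a (fun y => pdR a G y) x)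
          + (∑ a : Fin 4, (pdR a G x) ^ 2) - (∑ a : Fin 4, (pdR a H x) ^ 2))
      = deriv (deriv g) (w x) * (2 * γ * (w x) + ∑ a : Fin 4, (κ a) ^ 2)
          + 4 * γ * deriv g (w x)
          - (g (w x)) ^ 5 * (2 * γ * (w x) + ∑ a : Fin 4, (κ a) ^ 2) := by
    intro x hx
    have e2 : Real.exp (2 * 𝒢 (w x)) = Real.exp (𝒢 (w x)) ^ 2 := by
      rw [two_mul, Real.exp_add, sq]
    have h1 : ∀ a, pdR a G x = deriv 𝒢 (w x) * (γ * x a + κ a) := fun a => hpdG a x hx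
    have h2 : ∀ a, pdR a H x = Real.exp (2 * 𝒢 (w x)) * (γ * x a + κ a) :=
      fun a => hpdH a x hx
    have h3 : ∀ a, pdR a (fun y => pdR a G y) x =
        deriv 𝒢 (w x) * γ + (γ * x a + κ a) * (deriv (deriv 𝒢) (w x) * (γ * x a + κ a)) :=
      fun a => hpd2G a x hx
    simp only [h1, h2, h3, hg1' (w x) hx, hg2 (w x) hx, e2]
    show _ = _ * (2 * γ * ((γ / 2) * ∑ a : Fin 4, (x a) ^ 2 + ∑ a : Fin 4, κ a * x a) + _)
      + _ - Real.exp (𝒢 _) ^ 5 * (2 * γ * ((γ / 2) * ∑ a : Fin 4, (x a) ^ 2 + ∑ a : Fin 4, κ a * x a) + _)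
    simp only [Fin.sum_univ_four]
    ring
  constructor
  · rintro hE t ⟨x, hx, rfl⟩
    rw [← key x hx, hE x hx, mul_zero]
  · intro hO x hx
    have h := key x hx
    rw [hO (w x) ⟨x, hx, rfl⟩] at h
    rcases mul_eq_zero.mp h with h' | h'
    · exact absurd h' (Real.exp_ne_zero _)
    · exact h'
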